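/- For every real x > 0, the digamma function satisfies ψ(x) ≤ log(x) − 1/(2x). -/

import Mathlib

open Real

/-- The digamma function ψ = Γ'/Γ. -/
noncomputable def digamma (x : ℝ) : ℝ := deriv Real.Gamma x / Real.Gamma x

lemma two_log_le (u : ℝ) (hu : 1 ≤ u) : 2 * Real.log u ≤ u - 1/u := by
  have hd : ∀ t : ℝ, 0 < t → HasDerivAt (fun s : ℝ => s - s⁻¹ - 2 * Real.log s)
      (1 - (-(t^2)⁻¹) - 2 * t⁻¹) t := fun t ht =>
    ((hasDerivAt_id' t).sub (hasDerivAt_inv ht.ne')).sub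
      ((Real.hasDerivAt_log ht.ne').const_mul 2)
  have key : MonotoneOn (fun s : ℝ => s - s⁻¹ - 2 * Real.log s) (Set.Ici 1) := by
    apply monotoneOn_of_deriv_nonneg (convex_Ici 1)
    · intro t ht
      have ht' : (0:ℝ) < t := lt_of_lt_of_le one_pos ht
      exact ((hd t ht').differentiableAt).continuousAt.continuousWithinAt
    · intro t ht
      rw [interior_Ici] at ht
      exact (hd t (one_pos.trans ht)).differentiableAt.differentiableWithinAt
    · intro t ht
      rw [interior_Ici] at ht
      have ht' := one_pos.trans (Set.mem_Ioi.mp ht)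
      rw [(hd t ht').deriv]
      have h2 : 1 - (-(t^2)⁻¹) - 2*t⁻¹ = (1 - t⁻¹)^2 := by field_simp; ring
      rw [h2]; positivity
  have h0 := key Set.self_mem_Ici hu hu
  simp only [Real.log_one, inv_one, mul_zero, sub_self, sub_zero] at h0
  rw [one_div]; linarith

lemma log_trapezoid (y : ℝ) (hy : 0 < y) :
    Real.log (y + 1) - Real.log y ≤ 1/(2*y) + 1/(2*(y+1)) := by
  have hu : (1:ℝ) ≤ (y+1)/y := by
    rw [le_div_iff₀ hy]; linarith
  have h := two_log_le ((y+1)/y) hu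
  rw [Real.log_div (by linarith) hy.ne'] at h
  have hy1 : (0:ℝ) < y + 1 := by linarith
  have heq : (y+1)/y - 1/((y+1)/y) = 1/y + 1/(y+1) := by
    rw [one_div_div]; field_simp; ring
  rw [heq] at h
  have : 1/(2*y) + 1/(2*(y+1)) = (1/y + 1/(y+1))/2 := by
    field_simp
  linarith

/-- ψ(x) ≤ log x - 1/(2x) for x > 0. -/
theorem digamma_le (x : ℝ) (hx : 0 < x) :
    digamma x ≤ Real.log x - 1 / (2 * x) := by
  set f : ℝ → ℝ := Real.log ∘ Real.Gamma with hf
  have hc : ConvexOn ℝ (Set.Ioi 0) f := Real.convexOn_log_Gamma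
  have hder : ∀ {y : ℝ}, 0 < y → DifferentiableAt ℝ f y := by
    intro y hy
    refine ((Real.differentiableAt_Gamma ?_).log (Real.Gamma_ne_zero ?_)) <;>
      exact fun m => ne_of_gt (lt_of_le_of_lt (neg_nonpos.mpr m.cast_nonneg) hy)
  have h_rec : ∀ y : ℝ, 0 < y → f (y + 1) = f y + Real.log y := by
    intro y hy
    simp only [hf, Function.comp_apply, Real.Gamma_add_one hy.ne',
      Real.log_mul hy.ne' (Real.Gamma_pos_of_pos hy).ne', add_comm]
  -- recurrence for the derivative
  have hder_rec : ∀ y : ℝ, 0 < y → deriv f (y + 1) = deriv f y + 1 / y := by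
    intro y hy
    rw [← deriv_comp_add_const, one_div, ← Real.deriv_log,
      ← deriv_add (hder hy) (Real.differentiableAt_log hy.ne')]
    apply Filter.EventuallyEq.deriv_eq
    filter_upwards [eventually_gt_nhds hy] using h_rec
  -- upper bound: ψ(y) ≤ log y
  have hub : ∀ y : ℝ, 0 < y → deriv f y ≤ Real.log y := by
    intro y hy
    have := hc.deriv_le_slope (Set.mem_Ioi.mpr hy)
      (Set.mem_Ioi.mpr (by linarith : (0:ℝ) < y + 1)) (by linarith) (hder hy)
    rwa [slope_def_field, show y + 1 - y = (1:ℝ) by ring, div_one, h_rec y hy,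
      add_sub_cancel_left] at this
  -- the auxiliary function g
  set g : ℝ → ℝ := fun y => Real.log y - 1/(2*y) - deriv f y with hg
  have hstep : ∀ y : ℝ, 0 < y → g (y + 1) ≤ g y := by
    intro y hy
    have hy1 : (0:ℝ) < y + 1 := by linarith
    have htrap := log_trapezoid y hy
    simp only [hg]
    rw [hder_rec y hy]
    have h2y : (2*y) ≠ 0 := by positivity
    have h2y1 : (2*(y+1)) ≠ 0 := by positivity
    have hhalf : 1/(2*y) + 1/(2*y) = 1/y := by field_simp; norm_num
    linarith
  have hmono : ∀ n : ℕ, g (x + n) ≤ g x := by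
    intro n
    induction n with
    | zero => simp
    | succ n ih =>
      have hxn : (0:ℝ) < x + n := by positivity
      calc g (x + (n+1 : ℕ)) = g ((x + n) + 1) := by push_cast; ring_nf
        _ ≤ g (x + n) := hstep _ hxn
        _ ≤ g x := ih
  have hlb : ∀ n : ℕ, -(1/(2*(x + n))) ≤ g (x + n) := by
    intro n
    have hxn : (0:ℝ) < x + n := by positivity
    have := hub (x + n) hxn
    simp only [hg]
    linarith
  -- conclude g x ≥ 0
  have hgx : 0 ≤ g x := by
    by_contra hneg
    push_neg at hneg
    obtain ⟨n, hn⟩ := exists_nat_gt (1/(2*(-g x)) - x)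
    have hxn : (0:ℝ) < x + n := by positivity
    have h1 : 1/(2*(-g x)) < x + n := by linarith
    have hc0 : (0:ℝ) < -g x := by linarith
    have h2 : 1/(2*(x+n)) < -g x := by
      rw [div_lt_iff₀ (by positivity)] at h1 ⊢
      nlinarith
    have := (hlb n).trans (hmono n)
    linarith
  -- identify digamma with deriv f
  have hdig : digamma x = deriv f x := by
    rw [hf, Function.comp_def, deriv.log (Real.differentiableAt_Gamma
      (fun m => ne_of_gt (lt_of_le_of_lt (neg_nonpos.mpr m.cast_nonneg) hx)))
      (Real.Gamma_pos_of_pos hx).ne']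
    rfl
  simp only [hg] at hgx
  rw [hdig]
  linarith
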